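/- Let r ∈ R, and let v_H = −4rY⁴ − 2X³Y + 2XY³, v_P = −3X²Y² + 2rXY³ − Y⁴, v_E = X⁴ − Y⁴ − 2rX³Y − 2rXY³ be the tangent vectors at f = Y(X²+Y²)(X−rY) to its PSL(2,R)-orbit. Then the three vectors w1 = (7r+3r³)v_H + (6−2r²)v_P + (5+r²)v_E, w2 = 4v_P + v_E, w3 = v_H are pairwise B-orthogonal with q(w1) < 0, q(w2) > 0, q(w3) > 0; hence span{v_H, v_P, v_E} has signature (1,2). -/

import Mathlib

/-- Coefficient convention: `a 0, a 1, a 2, a 3, a 4` are the coefficients of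
`X⁴, X³Y, X²Y², XY³, Y⁴` respectively (so `a 0 = a₄, …, a 4 = a₀` in the paper's notation). -/
noncomputable def qq (a : Fin 5 → ℝ) : ℝ := 2 * a 0 * a 4 - (1/2) * a 3 * a 1 + (1/6) * (a 2)^2

/-- The polarization of `qq`. -/
noncomputable def bb (f g : Fin 5 → ℝ) : ℝ := (1/2) * (qq (f + g) - qq f - qq g)

/-- Evaluation of the quartic with coefficient vector `a` at `(x, y)`. -/
noncomputable def ev (a : Fin 5 → ℝ) (x y : ℝ) : ℝ :=
  a 0 * x^4 + a 1 * x^3 * y + a 2 * x^2 * y^2 + a 3 * x * y^3 + a 4 * y^4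

/-- For the tangent vectors `v_H = −4rY⁴ − 2X³Y + 2XY³`, `v_P = −3X²Y² + 2rXY³ − Y⁴`,
`v_E = X⁴ − Y⁴ − 2rX³Y − 2rXY³` at `f = Y(X²+Y²)(X−rY)`, the vectors
`w₁ = (7r+3r³)v_H + (6−2r²)v_P + (5+r²)v_E`, `w₂ = 4v_P + v_E`, `w₃ = v_H` are pairwise
`B`-orthogonal with `q(w₁) < 0`, `q(w₂) > 0`, `q(w₃) > 0`; hence `span{v_H, v_P, v_E}`
has signature (1,2) (one negative, two positive directions). -/
theorem stmt_16 (r : ℝ) :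
    let vH : Fin 5 → ℝ := ![0, -2, 0, 2, -4 * r]
    let vP : Fin 5 → ℝ := ![0, 0, -3, 2 * r, -1]
    let vE : Fin 5 → ℝ := ![1, -2 * r, 0, -2 * r, -1]
    let w₁ : Fin 5 → ℝ := (7 * r + 3 * r^3) • vH + (6 - 2 * r^2) • vP + (5 + r^2) • vE
    let w₂ : Fin 5 → ℝ := (4 : ℝ) • vP + vE
    let w₃ : Fin 5 → ℝ := vH
    bb w₁ w₂ = 0 ∧ bb w₁ w₃ = 0 ∧ bb w₂ w₃ = 0 ∧
    qq w₁ < 0 ∧ 0 < qq w₂ ∧ 0 < qq w₃ ∧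
    ∃ N P : Submodule ℝ (Fin 5 → ℝ),
      N ⊔ P = Submodule.span ℝ {vH, vP, vE} ∧
      Module.finrank ℝ N = 1 ∧ Module.finrank ℝ P = 2 ∧
      (∀ v ∈ N, v ≠ 0 → qq v < 0) ∧
      (∀ v ∈ P, v ≠ 0 → 0 < qq v) := by
  intro vH vP vE w₁ w₂ w₃
  have hpos : (0:ℝ) < 56 + 136*r^2 + 104*r^4 + 24*r^6 := by positivity
  have hq1 : qq w₁ = -(56 + 136*r^2 + 104*r^4 + 24*r^6) := by
    simp [qq, w₁, vH, vP, vE]; ring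
  have hq2 : qq w₂ = 14 + 6*r^2 := by simp [qq, w₂, vP, vE]; ring
  have hq3 : qq w₃ = 2 := by simp only [qq, w₃, vH, Matrix.cons_val]; norm_num
  refine ⟨by simp [bb, qq, w₁, w₂, w₃, vH, vP, vE]; ring,
          by simp [bb, qq, w₁, w₂, w₃, vH, vP, vE]; ring,
          by simp [bb, qq, w₁, w₂, w₃, vH, vP, vE]; ring,
          by rw [hq1]; linarith, by rw [hq2]; positivity, by rw [hq3]; norm_num,
          Submodule.span ℝ {w₁}, Submodule.span ℝ {w₂, w₃}, ?_, ?_, ?_, ?_, ?_⟩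
  · -- span equality
    rw [← Submodule.span_union]
    apply le_antisymm
    · rw [Submodule.span_le]
      have hwH : vH ∈ Submodule.span ℝ ({vH, vP, vE} : Set (Fin 5 → ℝ)) :=
        Submodule.subset_span (by simp)
      have hwP : vP ∈ Submodule.span ℝ ({vH, vP, vE} : Set (Fin 5 → ℝ)) :=
        Submodule.subset_span (by simp)
      have hwE : vE ∈ Submodule.span ℝ ({vH, vP, vE} : Set (Fin 5 → ℝ)) :=
        Submodule.subset_span (by simp)
      rintro x hx
      simp only [Set.singleton_union, Set.mem_insert_iff, Set.mem_singleton_iff] at hx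
      rcases hx with rfl | rfl | rfl
      · exact add_mem (add_mem (Submodule.smul_mem _ _ hwH) (Submodule.smul_mem _ _ hwP))
          (Submodule.smul_mem _ _ hwE)
      · exact add_mem (Submodule.smul_mem _ _ hwP) hwE
      · exact hwH
    · rw [Submodule.span_le]
      have hw₁ : w₁ ∈ Submodule.span ℝ ({w₁} ∪ {w₂, w₃} : Set (Fin 5 → ℝ)) :=
        Submodule.subset_span (by simp)
      have hw₂ : w₂ ∈ Submodule.span ℝ ({w₁} ∪ {w₂, w₃} : Set (Fin 5 → ℝ)) :=
        Submodule.subset_span (by simp)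
      have hw₃ : w₃ ∈ Submodule.span ℝ ({w₁} ∪ {w₂, w₃} : Set (Fin 5 → ℝ)) :=
        Submodule.subset_span (by simp)
      have hD : (14 + 6*r^2 : ℝ) ≠ 0 := by positivity
      have hvPmem : vP ∈ Submodule.span ℝ ({w₁} ∪ {w₂, w₃} : Set (Fin 5 → ℝ)) := by
        have key : vP = (1/(14+6*r^2)) •
            ((5+r^2) • w₂ + (-1:ℝ) • w₁ + (7*r+3*r^3) • w₃) := by
          funext i
          simp only [w₁, w₂, w₃, vH, vP, vE, Pi.smul_apply, Pi.add_apply, smul_eq_mul]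
          fin_cases i <;> (try simp) <;> (try field_simp) <;> (try ring) <;> (try tauto)
        rw [key]
        exact Submodule.smul_mem _ _ (add_mem (add_mem (Submodule.smul_mem _ _ hw₂)
          (Submodule.smul_mem _ _ hw₁)) (Submodule.smul_mem _ _ hw₃))
      have hvEmem : vE ∈ Submodule.span ℝ ({w₁} ∪ {w₂, w₃} : Set (Fin 5 → ℝ)) := by
        have key : vE = w₂ - (4:ℝ) • vP := by
          show vE = (4:ℝ) • vP + vE - (4:ℝ) • vP; abel
        rw [key]
        exact sub_mem hw₂ (Submodule.smul_mem _ _ hvPmem)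
      rintro x hx
      simp only [Set.mem_insert_iff, Set.mem_singleton_iff] at hx
      rcases hx with rfl | rfl | rfl
      · exact hw₃
      · exact hvPmem
      · exact hvEmem
  · -- finrank N = 1
    have hw₁ne : w₁ ≠ 0 := by
      intro h
      have h0 := congrFun h 0
      simp [w₁, vH, vP, vE] at h0
      nlinarith [sq_nonneg r]
    exact finrank_span_singleton hw₁ne
  · -- finrank P = 2
    have hli : LinearIndependent ℝ ![w₂, w₃] := by
      rw [LinearIndependent.pair_iff]
      intro s t hst
      have h0 := congrFun hst 0
      have h1 := congrFun hst 1
      simp [w₂, w₃, vH, vP, vE] at h0 h1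
      subst h0
      refine ⟨rfl, by linarith [h1]⟩
    have hset : ({w₂, w₃} : Set (Fin 5 → ℝ)) = Set.range ![w₂, w₃] := by
      ext x
      simp [Fin.exists_fin_two, eq_comm]
      tauto
    rw [hset, finrank_span_eq_card hli]
    simp
  · -- negativity on N
    intro v hv hvne
    rw [Submodule.mem_span_singleton] at hv
    obtain ⟨c, rfl⟩ := hv
    have hc : c ≠ 0 := by rintro rfl; simp at hvne
    have hq : qq (c • w₁) = c^2 * (-(56 + 136*r^2 + 104*r^4 + 24*r^6)) := by
      simp [qq, w₁, vH, vP, vE]; ring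
    rw [hq]
    have hc2 : (0:ℝ) < c^2 := by positivity
    nlinarith
  · -- positivity on P
    intro v hv hvne
    rw [Submodule.mem_span_pair] at hv
    obtain ⟨a, b, rfl⟩ := hv
    have hq : qq (a • w₂ + b • w₃) = (14+6*r^2)*a^2 + 2*b^2 := by
      simp [qq, w₂, w₃, vH, vP, vE]; ring
    rw [hq]
    have hab : a ≠ 0 ∨ b ≠ 0 := by
      by_contra h
      push_neg at h
      obtain ⟨rfl, rfl⟩ := h
      exact hvne (by simp)
    rcases hab with ha | hb
    · have h1 : 0 < (14+6*r^2)*a^2 := by positivity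
      nlinarith [sq_nonneg b]
    · have h1 : 0 < 2*b^2 := by positivity
      nlinarith [mul_nonneg (by positivity : (0:ℝ) ≤ 14+6*r^2) (sq_nonneg a)]
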